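/- For all i, j ∈ {1,…,B}, P_d(i,j) ≥ (ρ/B)·min{ L(j)/L(i), 1 }. Consequently, with π_d(j) = L(j)/Σ_{ℓ=1}^B L(ℓ), the Doeblin minorization P_d(i,j) ≥ ( ρ Σ_{ℓ=1}^B L(ℓ) / (B·max_{ℓ ∈ {1,…,B}} L(ℓ)) ) · π_d(j) holds for all i, j. -/

import Mathlib

open Finset

/-- the Doeblin minorization `P_d(i,j) ≥ (ρ/B)·min{L(j)/L(i), 1}` and
`P_d(i,j) ≥ (ρ Σ L / (B·max L))·π_d(j)` for the graph-enabled discretized MCMC. -/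
theorem stmt_7
    (B : ℕ) (hB : 1 ≤ B)
    (E : Fin B → Fin B → Prop) [DecidableRel E]
    (hEsymm : ∀ i j, E i j → E j i) (hEirr : ∀ i, ¬ E i i)
    (D : Fin B → ℕ)
    (hD : ∀ i, D i = (Finset.univ.filter (fun j => E i j)).card)
    (hD1 : ∀ i, 1 ≤ D i)
    (ρ : ℝ) (hρ0 : 0 < ρ) (hρ1 : ρ < 1)
    (q : Fin B → Fin B → ℝ)
    (hq : ∀ i j, q i j = ρ / B + (1 - ρ) * (if E i j then (1 : ℝ) else 0) / (D i))
    (L : Fin B → ℝ) (hL : ∀ i, 0 < L i)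
    (P : Fin B → Fin B → ℝ)
    (hPoff : ∀ i j, i ≠ j → P i j = q i j * min (q j i * L j / (q i j * L i)) 1)
    (hPdiag : ∀ i, P i i = 1 - ∑ j ∈ Finset.univ.erase i, P i j)
    (πd : Fin B → ℝ) (hπd : ∀ j, πd j = L j / ∑ ℓ, L ℓ) :
    (∀ i j, ρ / B * min (L j / L i) 1 ≤ P i j) ∧
    (∀ i j, ρ * (∑ ℓ, L ℓ) /
        (B * Finset.univ.sup' ⟨⟨0, hB⟩, Finset.mem_univ _⟩ L) * πd j ≤ P i j) := by
  have hBpos : (0 : ℝ) < B := by exact_mod_cast Nat.lt_of_lt_of_le Nat.zero_lt_one hB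
  have hρB : (0 : ℝ) < ρ / B := div_pos hρ0 hBpos
  have hqlb : ∀ i j, ρ / B ≤ q i j := by
    intro i j
    rw [hq]
    have hDpos : (0 : ℝ) < D i := by exact_mod_cast hD1 i
    have : 0 ≤ (1 - ρ) * (if E i j then (1 : ℝ) else 0) / (D i) := by
      apply div_nonneg _ hDpos.le
      apply mul_nonneg (by linarith)
      split <;> norm_num
    linarith
  have hqpos : ∀ i j, 0 < q i j := fun i j => lt_of_lt_of_le hρB (hqlb i j)
  have hqrow : ∀ i, ∑ j, q i j = 1 := by
    intro i
    have hDpos : (0 : ℝ) < D i := by exact_mod_cast hD1 i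
    have hsum : ∑ j, (if E i j then (1 : ℝ) else 0) = (D i : ℝ) := by
      rw [Finset.sum_boole, hD i]
    calc ∑ j, q i j = ∑ j : Fin B, (ρ / B + (1 - ρ) * (if E i j then (1:ℝ) else 0) / (D i)) := by
          simp_rw [hq]
      _ = (B : ℝ) * (ρ / B) + (1 - ρ) / (D i) * ∑ j, (if E i j then (1:ℝ) else 0) := by
          rw [Finset.sum_add_distrib, Finset.sum_const, Finset.card_univ, Fintype.card_fin,
            nsmul_eq_mul, Finset.mul_sum]
          congr 1
          exact Finset.sum_congr rfl fun j _ => by ring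
      _ = 1 := by
          rw [hsum]
          field_simp
          ring
  have hPle : ∀ i j, i ≠ j → P i j ≤ q i j := by
    intro i j hij
    rw [hPoff i j hij]
    calc q i j * min (q j i * L j / (q i j * L i)) 1 ≤ q i j * 1 := by
          apply mul_le_mul_of_nonneg_left (min_le_right _ _) (hqpos i j).le
      _ = q i j := mul_one _
  have key : ∀ i j, ρ / B * min (L j / L i) 1 ≤ P i j := by
    intro i j
    by_cases hij : i = j
    · subst hij
      have hLi : L i / L i = 1 := div_self (hL i).ne'
      rw [hLi, min_self, mul_one, hPdiag i]
      have hqii : q i i = ρ / B := by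
        rw [hq]
        simp [hEirr i]
      have hsum_le : ∑ j ∈ Finset.univ.erase i, P i j ≤ ∑ j ∈ Finset.univ.erase i, q i j := by
        apply Finset.sum_le_sum
        intro j hj
        exact hPle i j (Ne.symm (Finset.ne_of_mem_erase hj))
      have herase : ∑ j ∈ Finset.univ.erase i, q i j = 1 - ρ / B := by
        have := Finset.add_sum_erase Finset.univ (q i) (Finset.mem_univ i)
        rw [hqrow i] at this
        rw [hqii] at this
        linarith
      linarith [hsum_le, herase.le]
    · rw [hPoff i j hij]
      rcases le_or_gt 1 (q j i * L j / (q i j * L i)) with h1 | h1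
      · rw [min_eq_right h1, mul_one]
        calc ρ / B * min (L j / L i) 1 ≤ ρ / B * 1 := by
              apply mul_le_mul_of_nonneg_left (min_le_right _ _) hρB.le
          _ = ρ / B := mul_one _
          _ ≤ q i j := hqlb i j
      · rw [min_eq_left h1.le]
        have hqij : q i j ≠ 0 := (hqpos i j).ne'
        have heq : q i j * (q j i * L j / (q i j * L i)) = q j i * (L j / L i) := by
          rw [mul_div_assoc', mul_div_mul_left _ _ hqij, mul_div_assoc]
        rw [heq]
        calc ρ / B * min (L j / L i) 1 ≤ ρ / B * (L j / L i) := by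
              apply mul_le_mul_of_nonneg_left (min_le_left _ _) hρB.le
          _ ≤ q j i * (L j / L i) := by
              apply mul_le_mul_of_nonneg_right (hqlb j i)
              exact (div_pos (hL j) (hL i)).le
  refine ⟨key, ?_⟩
  intro i j
  have hsumL : (0 : ℝ) < ∑ ℓ, L ℓ := Finset.sum_pos (fun ℓ _ => hL ℓ) ⟨⟨0, hB⟩, Finset.mem_univ _⟩
  set M := Finset.univ.sup' ⟨⟨0, hB⟩, Finset.mem_univ _⟩ L with hM
  have hMpos : 0 < M := lt_of_lt_of_le (hL i) (Finset.le_sup' L (Finset.mem_univ i))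
  have hLiM : L i ≤ M := Finset.le_sup' L (Finset.mem_univ i)
  have hLjM : L j ≤ M := Finset.le_sup' L (Finset.mem_univ j)
  have : ρ * (∑ ℓ, L ℓ) / (B * M) * πd j = ρ / B * (L j / M) := by
    rw [hπd]
    field_simp
  rw [this]
  refine le_trans ?_ (key i j)
  apply mul_le_mul_of_nonneg_left _ hρB.le
  apply le_min
  · exact div_le_div_of_nonneg_left (hL j).le (hL i) hLiM
  · rw [div_le_one hMpos]; exact hLjM
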